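/- Lehman covariance identity and bound: if S, T are positive quadrant dependent random variables (i.e. H(s,t) = P(S ≥ s, T ≥ t) − P(S ≥ s)P(T ≥ t) ≥ 0 for all s,t), then for any continuously differentiable functions f, g with bounded derivatives, Cov(f(S), g(T)) = ∫∫ f'(s)g'(t)H(s,t) ds dt, and hence |Cov(f(S), g(T))| ≤ ‖f'‖_∞ ‖g'‖_∞ Cov(S,T). -/

import Mathlib

open MeasureTheory

noncomputable section LehmanAux

open MeasureTheory Set Filter

/-- step function -/
def stepu (s x : ℝ) : ℝ := if s ≤ x then 1 else 0

lemma stepu_abs_le (s x : ℝ) : |stepu s x| ≤ 1 := by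
  unfold stepu; split <;> simp

lemma deriv_eq_zero_of_eventually_const {h : ℝ → ℝ} {x c : ℝ}
    (he : h =ᶠ[nhds x] fun _ => c) : deriv h x = 0 := by
  rw [he.deriv_eq]; simp

lemma deriv_zero_outside {h : ℝ → ℝ} {b x : ℝ} (h0 : ∀ y, b ≤ |y| → h y = 0)
    (hx : b < |x|) : deriv h x = 0 := by
  apply deriv_eq_zero_of_eventually_const (c := 0)
  have hop : IsOpen {y : ℝ | b < |y|} := isOpen_lt continuous_const continuous_abs
  filter_upwards [hop.mem_nhds hx] with y hy
  exact h0 y hy.le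

lemma exists_bound_outside (h : ℝ → ℝ) (hc : Continuous h) (b : ℝ)
    (h0 : ∀ x, b < |x| → h x = 0) : ∃ C : ℝ, 0 ≤ C ∧ ∀ x, |h x| ≤ C := by
  have hcs : HasCompactSupport h := by
    apply HasCompactSupport.intro (isCompact_Icc (a := -b) (b := b))
    intro x hx
    apply h0
    simp only [mem_Icc, not_and_or, not_le] at hx
    rcases hx with hx | hx
    · exact lt_of_lt_of_le (by linarith) (neg_le_abs x)
    · exact lt_of_lt_of_le hx (le_abs_self x)
  obtain ⟨C, hC⟩ := hcs.exists_bound_of_continuous hc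
  exact ⟨C, le_trans (abs_nonneg (h 0)) (by simpa using hC 0), fun x => by simpa using hC x⟩


lemma ftc_step (h : ℝ → ℝ) (hh : ContDiff ℝ 1 h) (b : ℝ) (hb : 0 < b)
    (h0 : ∀ y, b ≤ |y| → h y = 0) (x : ℝ) :
    ∫ s in Icc (-b) b, deriv h s * stepu s x = h x := by
  have hcont : Continuous (deriv h) := hh.continuous_deriv le_rfl
  by_cases hx : x < -b
  · have he : EqOn (fun s => deriv h s * stepu s x) (fun _ => (0:ℝ)) (Icc (-b) b) := by
      intro s hs
      have : ¬ s ≤ x := by have := hs.1; intro hc; linarith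
      simp [stepu, this]
    rw [setIntegral_congr_fun measurableSet_Icc he]
    simp only [integral_zero]
    symm
    exact h0 x (le_trans (by linarith) (neg_le_abs x))
  · push_neg at hx
    have hmin : -b ≤ min b x := le_min (by linarith) hx
    have he : EqOn (fun s => deriv h s * stepu s x)
        ((Iic x).indicator (deriv h)) (Icc (-b) b) := by
      intro s _
      by_cases hs : s ≤ x <;> simp [stepu, hs, Set.indicator, mem_Iic]
    rw [setIntegral_congr_fun measurableSet_Icc he,
      setIntegral_indicator measurableSet_Iic]
    have hset : Icc (-b) b ∩ Iic x = Icc (-b) (min b x) := by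
      ext s; simp only [mem_inter_iff, mem_Icc, mem_Iic, le_min_iff]; tauto
    rw [hset, integral_Icc_eq_integral_Ioc, ← intervalIntegral.integral_of_le hmin,
      intervalIntegral.integral_deriv_eq_sub
        (fun y _ => hh.differentiable one_ne_zero y)
        (hcont.intervalIntegrable _ _)]
    have hhb : h (-b) = 0 := h0 _ (by rw [abs_neg, abs_of_pos hb])
    rw [hhb, sub_zero]
    by_cases hxb : x ≤ b
    · rw [min_eq_right hxb]
    · rw [min_eq_left (le_of_not_ge hxb)]
      rw [h0 b (by rw [abs_of_pos hb]), h0 x (le_trans (le_of_not_ge hxb) (le_abs_self x))]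


lemma measurable_stepu {α : Type*} [MeasurableSpace α] {p q : α → ℝ}
    (hp : Measurable p) (hq : Measurable q) :
    Measurable fun a => stepu (p a) (q a) :=
  Measurable.ite (measurableSet_le hp hq) measurable_const measurable_const

lemma key_identity (μ : Measure (ℝ × ℝ)) [IsProbabilityMeasure μ]
    (H : ℝ → ℝ → ℝ)
    (hH : ∀ s t, H s t = (μ {q | s ≤ q.1 ∧ t ≤ q.2}).toReal
      - (μ {q | s ≤ q.1}).toReal * (μ {q | t ≤ q.2}).toReal)
    (h k : ℝ → ℝ) (hh : ContDiff ℝ 1 h) (hk : ContDiff ℝ 1 k)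
    (b : ℝ) (hb : 0 < b)
    (hhs : ∀ x, b ≤ |x| → h x = 0) (hks : ∀ x, b ≤ |x| → k x = 0) :
    (∫ q, h q.1 * k q.2 ∂μ) - (∫ q, h q.1 ∂μ) * (∫ q, k q.2 ∂μ)
      = ∫ p : ℝ × ℝ, deriv h p.1 * deriv k p.2 * H p.1 p.2 := by
  have hImeas : MeasurableSet (Icc (-b) b) := measurableSet_Icc
  set ρ : Measure ℝ := volume.restrict (Icc (-b) b) with hρdef
  haveI : IsFiniteMeasure ρ := by
    constructor
    rw [hρdef, Measure.restrict_apply_univ]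
    exact measure_Icc_lt_top
  have hdh : Continuous (deriv h) := hh.continuous_deriv le_rfl
  have hdk : Continuous (deriv k) := hk.continuous_deriv le_rfl
  obtain ⟨Dh, hDh0, hDh⟩ := exists_bound_outside (deriv h) hdh b
    (fun x hx => deriv_zero_outside hhs hx)
  obtain ⟨Dk, hDk0, hDk⟩ := exists_bound_outside (deriv k) hdk b
    (fun x hx => deriv_zero_outside hks hx)
  have hA : ∀ x, ∫ s, deriv h s * stepu s x ∂ρ = h x := by
    intro x; rw [hρdef]; exact ftc_step h hh b hb hhs x
  have hB : ∀ x, ∫ t, deriv k t * stepu t x ∂ρ = k x := by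
    intro x; rw [hρdef]; exact ftc_step k hk b hb hks x
  -- bounds
  have bnd1 : ∀ (s x : ℝ), |deriv h s * stepu s x| ≤ Dh := by
    intro s x
    rw [abs_mul]
    calc |deriv h s| * |stepu s x| ≤ Dh * 1 :=
          mul_le_mul (hDh _) (stepu_abs_le _ _) (abs_nonneg _) hDh0
      _ = Dh := mul_one _
  have bnd2 : ∀ (t x : ℝ), |deriv k t * stepu t x| ≤ Dk := by
    intro t x
    rw [abs_mul]
    calc |deriv k t| * |stepu t x| ≤ Dk * 1 :=
          mul_le_mul (hDk _) (stepu_abs_le _ _) (abs_nonneg _) hDk0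
      _ = Dk := mul_one _
  -- integrability of the big kernel, (q, p) order
  have hWint : Integrable (fun z : (ℝ × ℝ) × (ℝ × ℝ) =>
      (deriv h z.2.1 * stepu z.2.1 z.1.1) * (deriv k z.2.2 * stepu z.2.2 z.1.2))
      (μ.prod (ρ.prod ρ)) := by
    refine ⟨Measurable.aestronglyMeasurable ?_,
      HasFiniteIntegral.of_bounded (C := Dh * Dk) (ae_of_all _ fun z => ?_)⟩
    · exact ((hdh.measurable.comp (measurable_fst.comp measurable_snd)).mul
        (measurable_stepu (measurable_fst.comp measurable_snd)
          (measurable_fst.comp measurable_fst))).mul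
        ((hdk.measurable.comp (measurable_snd.comp measurable_snd)).mul
        (measurable_stepu (measurable_snd.comp measurable_snd)
          (measurable_snd.comp measurable_fst)))
    · rw [Real.norm_eq_abs, abs_mul]
      exact mul_le_mul (bnd1 _ _) (bnd2 _ _) (abs_nonneg _) hDh0
  -- integrability, (p, q) order
  have hWint' : Integrable (fun z : (ℝ × ℝ) × (ℝ × ℝ) =>
      (deriv h z.1.1 * stepu z.1.1 z.2.1) * (deriv k z.1.2 * stepu z.1.2 z.2.2))
      ((ρ.prod ρ).prod μ) := by
    refine ⟨Measurable.aestronglyMeasurable ?_,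
      HasFiniteIntegral.of_bounded (C := Dh * Dk) (ae_of_all _ fun z => ?_)⟩
    · exact ((hdh.measurable.comp (measurable_fst.comp measurable_fst)).mul
        (measurable_stepu (measurable_fst.comp measurable_fst)
          (measurable_fst.comp measurable_snd))).mul
        ((hdk.measurable.comp (measurable_snd.comp measurable_fst)).mul
        (measurable_stepu (measurable_snd.comp measurable_fst)
          (measurable_snd.comp measurable_snd)))
    · rw [Real.norm_eq_abs, abs_mul]
      exact mul_le_mul (bnd1 _ _) (bnd2 _ _) (abs_nonneg _) hDh0
  -- single-variable kernels
  have hVint : Integrable (fun z : (ℝ × ℝ) × ℝ => deriv h z.2 * stepu z.2 z.1.1)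
      (μ.prod ρ) := by
    refine ⟨Measurable.aestronglyMeasurable ?_,
      HasFiniteIntegral.of_bounded (C := Dh) (ae_of_all _ fun z => ?_)⟩
    · exact (hdh.measurable.comp measurable_snd).mul
        (measurable_stepu measurable_snd (measurable_fst.comp measurable_fst))
    · rw [Real.norm_eq_abs]; exact bnd1 _ _
  have hVint' : Integrable (fun z : ℝ × (ℝ × ℝ) => deriv h z.1 * stepu z.1 z.2.1)
      (ρ.prod μ) := by
    refine ⟨Measurable.aestronglyMeasurable ?_,
      HasFiniteIntegral.of_bounded (C := Dh) (ae_of_all _ fun z => ?_)⟩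
    · exact (hdh.measurable.comp measurable_fst).mul
        (measurable_stepu measurable_fst (measurable_fst.comp measurable_snd))
    · rw [Real.norm_eq_abs]; exact bnd1 _ _
  have hUint : Integrable (fun z : (ℝ × ℝ) × ℝ => deriv k z.2 * stepu z.2 z.1.2)
      (μ.prod ρ) := by
    refine ⟨Measurable.aestronglyMeasurable ?_,
      HasFiniteIntegral.of_bounded (C := Dk) (ae_of_all _ fun z => ?_)⟩
    · exact (hdk.measurable.comp measurable_snd).mul
        (measurable_stepu measurable_snd (measurable_snd.comp measurable_fst))
    · rw [Real.norm_eq_abs]; exact bnd2 _ _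
  have hUint' : Integrable (fun z : ℝ × (ℝ × ℝ) => deriv k z.1 * stepu z.1 z.2.2)
      (ρ.prod μ) := by
    refine ⟨Measurable.aestronglyMeasurable ?_,
      HasFiniteIntegral.of_bounded (C := Dk) (ae_of_all _ fun z => ?_)⟩
    · exact (hdk.measurable.comp measurable_fst).mul
        (measurable_stepu measurable_fst (measurable_snd.comp measurable_snd))
    · rw [Real.norm_eq_abs]; exact bnd2 _ _
  -- pointwise evaluations of μ-integrals
  have hsetK : ∀ p : ℝ × ℝ, MeasurableSet {q : ℝ × ℝ | p.1 ≤ q.1 ∧ p.2 ≤ q.2} := fun p =>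
    (measurableSet_le measurable_const measurable_fst).inter
      (measurableSet_le measurable_const measurable_snd)
  have hsetA : ∀ s : ℝ, MeasurableSet {q : ℝ × ℝ | s ≤ q.1} := fun s =>
    measurableSet_le measurable_const measurable_fst
  have hsetB : ∀ t : ℝ, MeasurableSet {q : ℝ × ℝ | t ≤ q.2} := fun t =>
    measurableSet_le measurable_const measurable_snd
  have hKpt : ∀ p : ℝ × ℝ,
      (∫ q, (deriv h p.1 * stepu p.1 q.1) * (deriv k p.2 * stepu p.2 q.2) ∂μ)
        = deriv h p.1 * deriv k p.2 * (μ {q | p.1 ≤ q.1 ∧ p.2 ≤ q.2}).toReal := by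
    intro p
    have e : (fun q : ℝ × ℝ => (deriv h p.1 * stepu p.1 q.1) * (deriv k p.2 * stepu p.2 q.2))
        = fun q => (deriv h p.1 * deriv k p.2) *
            ({q : ℝ × ℝ | p.1 ≤ q.1 ∧ p.2 ≤ q.2}.indicator (fun _ => (1:ℝ)) q) := by
      funext q
      by_cases h1 : p.1 ≤ q.1 <;> by_cases h2 : p.2 ≤ q.2 <;>
        simp [stepu, h1, h2, Set.indicator] <;> ring
    rw [e, integral_const_mul _ _, integral_indicator_const (1:ℝ) (hsetK p), smul_eq_mul, mul_one, measureReal_def]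
  have hApt : ∀ s : ℝ, (∫ q, deriv h s * stepu s q.1 ∂μ)
      = deriv h s * (μ {q | s ≤ q.1}).toReal := by
    intro s
    have e : (fun q : ℝ × ℝ => deriv h s * stepu s q.1)
        = fun q => deriv h s * ({q : ℝ × ℝ | s ≤ q.1}.indicator (fun _ => (1:ℝ)) q) := by
      funext q
      by_cases h1 : s ≤ q.1 <;> simp [stepu, h1, Set.indicator]
    rw [e, integral_const_mul _ _, integral_indicator_const (1:ℝ) (hsetA s), smul_eq_mul, mul_one, measureReal_def]
  have hBpt : ∀ t : ℝ, (∫ q, deriv k t * stepu t q.2 ∂μ)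
      = deriv k t * (μ {q | t ≤ q.2}).toReal := by
    intro t
    have e : (fun q : ℝ × ℝ => deriv k t * stepu t q.2)
        = fun q => deriv k t * ({q : ℝ × ℝ | t ≤ q.2}.indicator (fun _ => (1:ℝ)) q) := by
      funext q
      by_cases h1 : t ≤ q.2 <;> simp [stepu, h1, Set.indicator]
    rw [e, integral_const_mul _ _, integral_indicator_const (1:ℝ) (hsetB t), smul_eq_mul, mul_one, measureReal_def]
  -- main double-integral identity
  have step1 : ∫ q, h q.1 * k q.2 ∂μ
      = ∫ p, deriv h p.1 * deriv k p.2 * (μ {q | p.1 ≤ q.1 ∧ p.2 ≤ q.2}).toReal ∂(ρ.prod ρ) := by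
    have e1 : ∫ q, h q.1 * k q.2 ∂μ = ∫ q, ∫ p,
        (deriv h p.1 * stepu p.1 q.1) * (deriv k p.2 * stepu p.2 q.2) ∂(ρ.prod ρ) ∂μ := by
      refine integral_congr_ae (ae_of_all _ fun q => ?_)
      dsimp only
      rw [← hA q.1, ← hB q.2]
      exact (integral_prod_mul (μ := ρ) (ν := ρ)
        (fun s => deriv h s * stepu s q.1) (fun t => deriv k t * stepu t q.2)).symm
    rw [e1, integral_integral_swap hWint]
    exact integral_congr_ae (ae_of_all _ fun p => hKpt p)
  have step2 : ∫ q, h q.1 ∂μ = ∫ s, deriv h s * (μ {q | s ≤ q.1}).toReal ∂ρ := by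
    have e1 : ∫ q, h q.1 ∂μ = ∫ q, ∫ s, deriv h s * stepu s q.1 ∂ρ ∂μ :=
      integral_congr_ae (ae_of_all _ fun q => (hA q.1).symm)
    rw [e1, integral_integral_swap hVint]
    exact integral_congr_ae (ae_of_all _ fun s => hApt s)
  have step3 : ∫ q, k q.2 ∂μ = ∫ t, deriv k t * (μ {q | t ≤ q.2}).toReal ∂ρ := by
    have e1 : ∫ q, k q.2 ∂μ = ∫ q, ∫ t, deriv k t * stepu t q.2 ∂ρ ∂μ :=
      integral_congr_ae (ae_of_all _ fun q => (hB q.2).symm)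
    rw [e1, integral_integral_swap hUint]
    exact integral_congr_ae (ae_of_all _ fun t => hBpt t)
  -- integrability of the two integrands over ρ.prod ρ
  have IntK : Integrable (fun p : ℝ × ℝ =>
      deriv h p.1 * deriv k p.2 * (μ {q | p.1 ≤ q.1 ∧ p.2 ≤ q.2}).toReal) (ρ.prod ρ) := by
    refine (hWint'.integral_prod_left).congr (ae_of_all _ fun p => ?_)
    exact hKpt p
  have IntA : Integrable (fun s : ℝ => deriv h s * (μ {q | s ≤ q.1}).toReal) ρ := by
    refine (hVint'.integral_prod_left).congr (ae_of_all _ fun s => ?_)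
    exact hApt s
  have IntB : Integrable (fun t : ℝ => deriv k t * (μ {q | t ≤ q.2}).toReal) ρ := by
    refine (hUint'.integral_prod_left).congr (ae_of_all _ fun t => ?_)
    exact hBpt t
  have step4 : (∫ s, deriv h s * (μ {q | s ≤ q.1}).toReal ∂ρ)
        * (∫ t, deriv k t * (μ {q | t ≤ q.2}).toReal ∂ρ)
      = ∫ p : ℝ × ℝ, (deriv h p.1 * (μ {q | p.1 ≤ q.1}).toReal)
        * (deriv k p.2 * (μ {q | p.2 ≤ q.2}).toReal) ∂(ρ.prod ρ) :=
    (integral_prod_mul _ _).symm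
  have IntAB : Integrable (fun p : ℝ × ℝ => (deriv h p.1 * (μ {q | p.1 ≤ q.1}).toReal)
      * (deriv k p.2 * (μ {q | p.2 ≤ q.2}).toReal)) (ρ.prod ρ) := IntA.mul_prod IntB
  have main : (∫ q, h q.1 * k q.2 ∂μ) - (∫ q, h q.1 ∂μ) * (∫ q, k q.2 ∂μ)
      = ∫ p : ℝ × ℝ, deriv h p.1 * deriv k p.2 * H p.1 p.2 ∂(ρ.prod ρ) := by
    rw [step1, step2, step3, step4, ← integral_sub IntK IntAB]
    refine integral_congr_ae (ae_of_all _ fun p => ?_)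
    dsimp only
    rw [hH p.1 p.2]; ring
  rw [main, hρdef, Measure.prod_restrict, ← Measure.volume_eq_prod]
  refine setIntegral_eq_integral_of_forall_compl_eq_zero fun p hp => ?_
  rw [Set.mem_prod] at hp
  push_neg at hp
  by_cases h1 : p.1 ∈ Icc (-b) b
  · have h2 := hp h1
    have : b < |p.2| := by
      rw [mem_Icc, ← abs_le] at h2; exact lt_of_not_ge h2
    rw [deriv_zero_outside hks this, mul_zero, zero_mul]
  · have : b < |p.1| := by
      rw [mem_Icc, ← abs_le] at h1; exact lt_of_not_ge h1
    rw [deriv_zero_outside hhs this, zero_mul, zero_mul]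


lemma cutoff_all (f : ℝ → ℝ) (hf : ContDiff ℝ 1 f) (Cf : ℝ) (hCf : ∀ s, |deriv f s| ≤ Cf) :
    ∃ (h : ℕ → ℝ → ℝ) (Mf : ℝ),
      (∀ n : ℕ, ContDiff ℝ 1 (h n)) ∧
      (∀ (n : ℕ) (x : ℝ), 2 * ((n : ℝ) + 1) ≤ |x| → h n x = 0) ∧
      (∀ (n : ℕ) (x : ℝ), |h n x| ≤ |f x|) ∧
      (∀ x : ℝ, ∀ᶠ n in atTop, h n x = f x) ∧
      (∀ x : ℝ, ∀ᶠ n in atTop, deriv (h n) x = deriv f x) ∧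
      (∀ (n : ℕ) (x : ℝ), |deriv (h n) x| ≤ Mf) := by
  have hCf0 : 0 ≤ Cf := le_trans (abs_nonneg _) (hCf 0)
  set φ : ContDiffBump (0 : ℝ) := ⟨1, 2, one_pos, one_lt_two⟩ with hφdef
  have φcd : ContDiff ℝ 1 ⇑φ := φ.contDiff
  have φ_one : ∀ y : ℝ, |y| ≤ 1 → φ y = 1 := fun y hy =>
    φ.one_of_mem_closedBall (by
      rw [Metric.mem_closedBall, Real.dist_eq, sub_zero]; exact hy)
  have φ_zero : ∀ y : ℝ, 2 ≤ |y| → φ y = 0 := fun y hy =>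
    φ.zero_of_le_dist (by rw [Real.dist_eq, sub_zero]; exact hy)
  have φ_le_one : ∀ y : ℝ, |φ y| ≤ 1 := fun y =>
    abs_le.mpr ⟨by linarith [φ.nonneg (x := y)], φ.le_one⟩
  have φd_cont : Continuous (deriv ⇑φ) := φcd.continuous_deriv le_rfl
  obtain ⟨Dφ, hDφ0, hDφ⟩ := exists_bound_outside (deriv ⇑φ) φd_cont 2
    (fun y hy => deriv_zero_outside φ_zero hy)
  have φd_zero_in : ∀ y : ℝ, |y| < 1 → deriv ⇑φ y = 0 := by
    intro y hy
    refine deriv_eq_zero_of_eventually_const (c := 1) ?_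
    have hop : IsOpen {z : ℝ | |z| < 1} := isOpen_lt continuous_abs continuous_const
    filter_upwards [hop.mem_nhds hy] with z hz
    exact φ_one z hz.le
  have growth_f : ∀ x : ℝ, |f x| ≤ |f 0| + Cf * |x| := by
    intro x
    have hls := convex_univ.norm_image_sub_le_of_norm_deriv_le
      (f := f) (fun y _ => hf.differentiable one_ne_zero y)
      (fun y _ => by rw [Real.norm_eq_abs]; exact hCf y) (mem_univ (0:ℝ)) (mem_univ x)
    rw [Real.norm_eq_abs, Real.norm_eq_abs, sub_zero] at hls
    have := abs_sub_abs_le_abs_sub (f x) (f 0)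
    linarith
  refine ⟨fun n x => f x * φ (x / ((n : ℝ) + 1)), Cf + (|f 0| + 2 * Cf) * Dφ,
    ?_, ?_, ?_, ?_, ?_, ?_⟩
  · intro n
    exact hf.mul (φcd.comp (contDiff_id.div_const _))
  · intro n x hx
    have hc : (0:ℝ) < (n : ℝ) + 1 := by positivity
    have : (2:ℝ) ≤ |x / ((n:ℝ)+1)| := by
      rw [abs_div, abs_of_pos hc, le_div_iff₀ hc]
      linarith
    show f x * φ (x / ((n:ℝ)+1)) = 0
    rw [φ_zero _ this, mul_zero]
  · intro n x
    rw [abs_mul]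
    exact mul_le_of_le_one_right (abs_nonneg _) (φ_le_one _)
  · intro x
    rw [eventually_atTop]
    refine ⟨⌈|x|⌉₊, fun n hn => ?_⟩
    have hc : (0:ℝ) < (n : ℝ) + 1 := by positivity
    have hxn : |x| ≤ (n : ℝ) + 1 := by
      calc |x| ≤ (⌈|x|⌉₊ : ℝ) := Nat.le_ceil _
        _ ≤ (n : ℝ) := by exact_mod_cast hn
        _ ≤ (n : ℝ) + 1 := by linarith
    have : |x / ((n:ℝ)+1)| ≤ 1 := by
      rw [abs_div, abs_of_pos hc, div_le_one hc]; exact hxn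
    show f x * φ (x / ((n:ℝ)+1)) = f x
    rw [φ_one _ this, mul_one]
  · intro x
    rw [eventually_atTop]
    refine ⟨⌈|x|⌉₊, fun n hn => ?_⟩
    have hc : (0:ℝ) < (n : ℝ) + 1 := by positivity
    have hxn : |x| < (n : ℝ) + 1 := by
      calc |x| ≤ (⌈|x|⌉₊ : ℝ) := Nat.le_ceil _
        _ ≤ (n : ℝ) := by exact_mod_cast hn
        _ < (n : ℝ) + 1 := by linarith
    have hlt : |x / ((n:ℝ)+1)| < 1 := by
      rw [abs_div, abs_of_pos hc, div_lt_one hc]; exact hxn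
    have hder : HasDerivAt (fun y => f y * φ (y / ((n:ℝ)+1)))
        (deriv f x * φ (x / ((n:ℝ)+1))
          + f x * (deriv ⇑φ (x / ((n:ℝ)+1)) * (1 / ((n:ℝ)+1)))) x := by
      have h1 : HasDerivAt (fun y : ℝ => y / ((n:ℝ)+1)) (1 / ((n:ℝ)+1)) x :=
        (hasDerivAt_id x).div_const _
      have h2 : HasDerivAt ⇑φ (deriv ⇑φ (x / ((n:ℝ)+1))) (x / ((n:ℝ)+1)) :=
        (φcd.differentiable one_ne_zero _).hasDerivAt
      have h3 := h2.comp x h1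
      exact ((hf.differentiable one_ne_zero x).hasDerivAt).mul h3
    rw [hder.deriv, φ_one _ hlt.le, φd_zero_in _ hlt, mul_one, zero_mul, mul_zero, add_zero]
  · intro n x
    have hc1 : (1:ℝ) ≤ (n : ℝ) + 1 := by
      have : (0:ℝ) ≤ (n:ℝ) := Nat.cast_nonneg n
      linarith
    have hc : (0:ℝ) < (n : ℝ) + 1 := by positivity
    have hder : HasDerivAt (fun y => f y * φ (y / ((n:ℝ)+1)))
        (deriv f x * φ (x / ((n:ℝ)+1))
          + f x * (deriv ⇑φ (x / ((n:ℝ)+1)) * (1 / ((n:ℝ)+1)))) x := by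
      have h1 : HasDerivAt (fun y : ℝ => y / ((n:ℝ)+1)) (1 / ((n:ℝ)+1)) x :=
        (hasDerivAt_id x).div_const _
      have h2 : HasDerivAt ⇑φ (deriv ⇑φ (x / ((n:ℝ)+1))) (x / ((n:ℝ)+1)) :=
        (φcd.differentiable one_ne_zero _).hasDerivAt
      have h3 := h2.comp x h1
      exact ((hf.differentiable one_ne_zero x).hasDerivAt).mul h3
    rw [hder.deriv]
    by_cases hx : |x| ≤ 2 * ((n:ℝ)+1)
    · have b1 : |deriv f x * φ (x / ((n:ℝ)+1))| ≤ Cf := by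
        rw [abs_mul]
        exact le_trans (mul_le_of_le_one_right (abs_nonneg _) (φ_le_one _)) (hCf x)
      have b2 : |f x * (deriv ⇑φ (x / ((n:ℝ)+1)) * (1 / ((n:ℝ)+1)))| ≤ (|f 0| + 2 * Cf) * Dφ := by
        rw [abs_mul, abs_mul]
        have e1 : |(1:ℝ) / ((n:ℝ)+1)| = 1 / ((n:ℝ)+1) := abs_of_pos (by positivity)
        rw [e1]
        have hfx : |f x| ≤ |f 0| + Cf * (2 * ((n:ℝ)+1)) := by
          have := growth_f x
          nlinarith
        have step : |f x| * (1 / ((n:ℝ)+1)) ≤ |f 0| + 2 * Cf := by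
          rw [mul_one_div, div_le_iff₀ hc]
          nlinarith [abs_nonneg (f 0)]
        calc |f x| * (|deriv ⇑φ (x / ((n:ℝ)+1))| * (1 / ((n:ℝ)+1)))
            = (|f x| * (1 / ((n:ℝ)+1))) * |deriv ⇑φ (x / ((n:ℝ)+1))| := by ring
          _ ≤ (|f 0| + 2 * Cf) * Dφ := by
              apply mul_le_mul step (hDφ _) (abs_nonneg _)
              nlinarith [abs_nonneg (f 0)]
      calc |deriv f x * φ (x / ((n:ℝ)+1))
            + f x * (deriv ⇑φ (x / ((n:ℝ)+1)) * (1 / ((n:ℝ)+1)))|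
          ≤ |deriv f x * φ (x / ((n:ℝ)+1))|
            + |f x * (deriv ⇑φ (x / ((n:ℝ)+1)) * (1 / ((n:ℝ)+1)))| := abs_add_le _ _
        _ ≤ Cf + (|f 0| + 2 * Cf) * Dφ := add_le_add b1 b2
    · push_neg at hx
      have h2a : (2:ℝ) ≤ |x / ((n:ℝ)+1)| := by
        rw [abs_div, abs_of_pos hc, le_div_iff₀ hc]
        linarith
      have h2b : (2:ℝ) < |x / ((n:ℝ)+1)| := by
        rw [abs_div, abs_of_pos hc, lt_div_iff₀ hc]
        linarith
      rw [φ_zero _ h2a, deriv_zero_outside φ_zero h2b]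
      simp only [mul_zero, zero_mul, add_zero, abs_zero]
      nlinarith [abs_nonneg (f 0), hDφ0]

end LehmanAux

/-- Lehman covariance identity and bound for positive quadrant dependent
random variables (with joint law `μ`): `Cov(f(S), g(T)) = ∫∫ f'(s)g'(t)H(s,t) ds dt`
and `|Cov(f(S), g(T))| ≤ ‖f'‖_∞ ‖g'‖_∞ ∫∫ H` (Hoeffding: `Cov(S,T) = ∫∫ H`). -/
theorem stmt9 (μ : Measure (ℝ × ℝ)) [IsProbabilityMeasure μ]
    (H : ℝ → ℝ → ℝ)
    (hH : ∀ s t, H s t = (μ {q | s ≤ q.1 ∧ t ≤ q.2}).toReal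
      - (μ {q | s ≤ q.1}).toReal * (μ {q | t ≤ q.2}).toReal)
    (hPQD : ∀ s t, 0 ≤ H s t)
    (hHint : Integrable (fun q : ℝ × ℝ => H q.1 q.2))
    (f g : ℝ → ℝ) (hf : ContDiff ℝ 1 f) (hg : ContDiff ℝ 1 g)
    (Cf Cg : ℝ) (hCf : ∀ s, |deriv f s| ≤ Cf) (hCg : ∀ t, |deriv g t| ≤ Cg)
    (hfg : Integrable (fun q : ℝ × ℝ => f q.1 * g q.2) μ)
    (hfi : Integrable (fun q : ℝ × ℝ => f q.1) μ)
    (hgi : Integrable (fun q : ℝ × ℝ => g q.2) μ)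
    (hprod : Integrable (fun q : ℝ × ℝ => deriv f q.1 * deriv g q.2 * H q.1 q.2)) :
    (∫ q, f q.1 * g q.2 ∂μ) - (∫ q, f q.1 ∂μ) * (∫ q, g q.2 ∂μ)
        = ∫ s, ∫ t, deriv f s * deriv g t * H s t ∧
      |(∫ q, f q.1 * g q.2 ∂μ) - (∫ q, f q.1 ∂μ) * (∫ q, g q.2 ∂μ)|
        ≤ Cf * Cg * ∫ s, ∫ t, H s t := by
  obtain ⟨hn, Mf, hncd, hnzero, hnle, hnev, hndev, hndb⟩ := cutoff_all f hf Cf hCf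
  obtain ⟨kn, Mg, kncd, knzero, knle, knev, kndev, kndb⟩ := cutoff_all g hg Cg hCg
  have hMf0 : 0 ≤ Mf := le_trans (abs_nonneg _) (hndb 0 0)
  have hMg0 : 0 ≤ Mg := le_trans (abs_nonneg _) (kndb 0 0)
  have iden : ∀ n : ℕ,
      (∫ q, hn n q.1 * kn n q.2 ∂μ) - (∫ q, hn n q.1 ∂μ) * (∫ q, kn n q.2 ∂μ)
        = ∫ p : ℝ × ℝ, deriv (hn n) p.1 * deriv (kn n) p.2 * H p.1 p.2 := fun n =>
    key_identity μ H hH (hn n) (kn n) (hncd n) (kncd n) (2 * ((n : ℝ) + 1))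
      (by positivity) (hnzero n) (knzero n)
  have T1 : Filter.Tendsto (fun n : ℕ => ∫ q, hn n q.1 * kn n q.2 ∂μ) Filter.atTop
      (nhds (∫ q, f q.1 * g q.2 ∂μ)) := by
    refine tendsto_integral_of_dominated_convergence (fun q => |f q.1 * g q.2|)
      (fun n => (((hncd n).continuous.comp continuous_fst).mul
        ((kncd n).continuous.comp continuous_snd)).aestronglyMeasurable)
      hfg.abs (fun n => ae_of_all _ fun q => ?_) (ae_of_all _ fun q => ?_)
    · simp only [Real.norm_eq_abs, abs_mul]
      exact mul_le_mul (hnle n q.1) (knle n q.2) (abs_nonneg _) (abs_nonneg _)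
    · refine Filter.Tendsto.congr' ?_ tendsto_const_nhds
      filter_upwards [hnev q.1, knev q.2] with n e1 e2
      rw [e1, e2]
  have T2 : Filter.Tendsto (fun n : ℕ => ∫ q, hn n q.1 ∂μ) Filter.atTop
      (nhds (∫ q, f q.1 ∂μ)) := by
    refine tendsto_integral_of_dominated_convergence (fun q => |f q.1|)
      (fun n => ((hncd n).continuous.comp continuous_fst).aestronglyMeasurable)
      hfi.abs (fun n => ae_of_all _ fun q => ?_) (ae_of_all _ fun q => ?_)
    · rw [Real.norm_eq_abs]; exact hnle n q.1
    · refine Filter.Tendsto.congr' ?_ tendsto_const_nhds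
      filter_upwards [hnev q.1] with n e1
      rw [e1]
  have T3 : Filter.Tendsto (fun n : ℕ => ∫ q, kn n q.2 ∂μ) Filter.atTop
      (nhds (∫ q, g q.2 ∂μ)) := by
    refine tendsto_integral_of_dominated_convergence (fun q => |g q.2|)
      (fun n => ((kncd n).continuous.comp continuous_snd).aestronglyMeasurable)
      hgi.abs (fun n => ae_of_all _ fun q => ?_) (ae_of_all _ fun q => ?_)
    · rw [Real.norm_eq_abs]; exact knle n q.2
    · refine Filter.Tendsto.congr' ?_ tendsto_const_nhds
      filter_upwards [knev q.2] with n e1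
      rw [e1]
  have T4 : Filter.Tendsto
      (fun n : ℕ => ∫ p : ℝ × ℝ, deriv (hn n) p.1 * deriv (kn n) p.2 * H p.1 p.2)
      Filter.atTop (nhds (∫ p : ℝ × ℝ, deriv f p.1 * deriv g p.2 * H p.1 p.2)) := by
    refine tendsto_integral_of_dominated_convergence (fun p => Mf * Mg * |H p.1 p.2|)
      (fun n => ((((hncd n).continuous_deriv le_rfl).comp continuous_fst).mul
        (((kncd n).continuous_deriv le_rfl).comp continuous_snd)).aestronglyMeasurable.mul
        hHint.aestronglyMeasurable)
      ((hHint.abs).const_mul (Mf * Mg)) (fun n => ae_of_all _ fun p => ?_)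
      (ae_of_all _ fun p => ?_)
    · simp only [Real.norm_eq_abs, abs_mul]
      refine mul_le_mul ?_ le_rfl (abs_nonneg _) (by positivity)
      exact mul_le_mul (hndb n p.1) (kndb n p.2) (abs_nonneg _) hMf0
    · refine Filter.Tendsto.congr' ?_ tendsto_const_nhds
      filter_upwards [hndev p.1, kndev p.2] with n e1 e2
      rw [e1, e2]
  have Tlhs : Filter.Tendsto (fun n : ℕ =>
      (∫ q, hn n q.1 * kn n q.2 ∂μ) - (∫ q, hn n q.1 ∂μ) * (∫ q, kn n q.2 ∂μ))
      Filter.atTop (nhds ((∫ q, f q.1 * g q.2 ∂μ)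
        - (∫ q, f q.1 ∂μ) * (∫ q, g q.2 ∂μ))) := T1.sub (T2.mul T3)
  rw [funext iden] at Tlhs
  have joint : (∫ q, f q.1 * g q.2 ∂μ) - (∫ q, f q.1 ∂μ) * (∫ q, g q.2 ∂μ)
      = ∫ p : ℝ × ℝ, deriv f p.1 * deriv g p.2 * H p.1 p.2 :=
    tendsto_nhds_unique Tlhs T4
  have hprod2 : Integrable (fun p : ℝ × ℝ => deriv f p.1 * deriv g p.2 * H p.1 p.2)
      ((volume : Measure ℝ).prod (volume : Measure ℝ)) := hprod
  have hHint2 : Integrable (fun p : ℝ × ℝ => H p.1 p.2)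
      ((volume : Measure ℝ).prod (volume : Measure ℝ)) := hHint
  have iter1 : (∫ p : ℝ × ℝ, deriv f p.1 * deriv g p.2 * H p.1 p.2)
      = ∫ s, ∫ t, deriv f s * deriv g t * H s t :=
    integral_prod _ hprod2
  have iterH : (∫ p : ℝ × ℝ, H p.1 p.2) = ∫ s, ∫ t, H s t :=
    integral_prod _ hHint2
  constructor
  · rw [joint, iter1]
  · rw [joint, ← iterH]
    calc |∫ p : ℝ × ℝ, deriv f p.1 * deriv g p.2 * H p.1 p.2|
        ≤ ∫ p : ℝ × ℝ, |deriv f p.1 * deriv g p.2 * H p.1 p.2| :=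
          by simpa only [Real.norm_eq_abs] using
            norm_integral_le_integral_norm (μ := (volume : Measure (ℝ × ℝ)))
              (fun p : ℝ × ℝ => deriv f p.1 * deriv g p.2 * H p.1 p.2)
      _ ≤ ∫ p : ℝ × ℝ, Cf * Cg * H p.1 p.2 := by
          refine integral_mono hprod.abs (hHint.const_mul _) fun p => ?_
          rw [abs_mul, abs_mul, abs_of_nonneg (hPQD p.1 p.2)]
          refine mul_le_mul ?_ le_rfl (hPQD p.1 p.2)
            (mul_nonneg (le_trans (abs_nonneg _) (hCf 0)) (le_trans (abs_nonneg _) (hCg 0)))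
          exact mul_le_mul (hCf p.1) (hCg p.2)
            (abs_nonneg _) (le_trans (abs_nonneg _) (hCf p.1))
      _ = Cf * Cg * ∫ p : ℝ × ℝ, H p.1 p.2 := integral_const_mul _ _
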